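/- Let G be a mono-C3-free edge-colored complete graph K_n with n ≥ 3. Then G contains a spanning subgraph which is a nice (n−2)-shovel. -/

import Mathlib

/-- An edge-coloring of `K_n` (on vertex set `Fin n`) has no monochromatic triangle. -/
def MonoC3Free (n : ℕ) (c : Fin n → Fin n → ℕ) : Prop :=
  ∀ u v w : Fin n, u ≠ v → v ≠ w → u ≠ w → ¬(c u v = c v w ∧ c u v = c u w)

/-- `p 0, p 1, …, p (t-1)` is a properly colored path on `t` vertices in the
edge-colored `K_n`: the vertices are distinct and consecutive edges get distinct colors. -/
def IsPCPath (n : ℕ) (c : Fin n → Fin n → ℕ) (p : ℕ → Fin n) (t : ℕ) : Prop :=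
  Set.InjOn p (Set.Iio t) ∧
    ∀ j : ℕ, j + 3 ≤ t → c (p j) (p (j + 1)) ≠ c (p (j + 1)) (p (j + 2))

/-- A nice `t`-shovel in the edge-colored `K_n`: a triangle `p 0, u₂, u₃` together with a
path `p 0, p 1, …, p (t-1)` on `t ≥ 1` vertices meeting the triangle exactly in `p 0`,
such that the path is properly colored, `u₂u₃` is a center edge of the triangle
(its color appears on no other edge of the triangle), and the color of the first path
edge `p 0 p 1` (when the path has an edge) differs from the colors of both triangle
edges at `p 0`. -/
def IsNiceShovel (n : ℕ) (c : Fin n → Fin n → ℕ) (t : ℕ) (p : ℕ → Fin n)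
    (u₂ u₃ : Fin n) : Prop :=
  1 ≤ t ∧ u₂ ≠ u₃ ∧ (∀ j < t, p j ≠ u₂ ∧ p j ≠ u₃) ∧
    IsPCPath n c p t ∧
    c u₂ u₃ ≠ c (p 0) u₂ ∧ c u₂ u₃ ≠ c (p 0) u₃ ∧
    (2 ≤ t → c (p 0) (p 1) ≠ c (p 0) u₂ ∧ c (p 0) (p 1) ≠ c (p 0) u₃)

section Aux
variable {n : ℕ} {c : Fin n → Fin n → ℕ}

lemma mono_ne (hmono : MonoC3Free n c) {u v w : Fin n} (huv : u ≠ v) (hvw : v ≠ w)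
    (huw : u ≠ w) (h : c u v = c v w) : c u w ≠ c u v := fun h2 =>
  hmono u v w huv hvw huw ⟨h, h2.symm⟩

lemma mono_ne2 (hmono : MonoC3Free n c) {u v w : Fin n} (huv : u ≠ v) (hvw : v ≠ w)
    (huw : u ≠ w) (h : c u v = c u w) : c v w ≠ c u v := fun h2 =>
  hmono u v w huv hvw huw ⟨h2.symm, h⟩

lemma center_exists (hsym : ∀ u v, c u v = c v u) (hmono : MonoC3Free n c)
    {x y z : Fin n} (hxy : x ≠ y) (hyz : y ≠ z) (hxz : x ≠ z) :
    ∃ v a b : Fin n,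
      ((v = x ∧ a = y ∧ b = z) ∨ (v = y ∧ a = x ∧ b = z) ∨ (v = z ∧ a = x ∧ b = y)) ∧
      c a b ≠ c v a ∧ c a b ≠ c v b := by
  have hm := hmono x y z hxy hyz hxz
  by_cases h1 : c y z ≠ c x y ∧ c y z ≠ c x z
  · exact ⟨x, y, z, Or.inl ⟨rfl, rfl, rfl⟩, h1.1, h1.2⟩
  · by_cases h2 : c x z ≠ c x y ∧ c x z ≠ c y z
    · refine ⟨y, x, z, Or.inr (Or.inl ⟨rfl, rfl, rfl⟩), ?_, h2.2⟩
      rw [hsym y x]; exact h2.1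
    · have h1' : c y z = c x y ∨ c y z = c x z := by
        by_contra hc; push_neg at hc; exact h1 hc
      have h2' : c x z = c x y ∨ c x z = c y z := by
        by_contra hc; push_neg at hc; exact h2 hc
      refine ⟨z, x, y, Or.inr (Or.inr ⟨rfl, rfl, rfl⟩), ?_, ?_⟩
      · rw [hsym z x]
        rcases h1' with h | h <;> rcases h2' with h' | h' <;>
          intro hh <;> exact hm ⟨by grind, by grind⟩
      · rw [hsym z y]
        rcases h1' with h | h <;> rcases h2' with h' | h' <;>
          intro hh <;> exact hm ⟨by grind, by grind⟩

lemma base_shovel {v a b : Fin n} (hva : v ≠ a) (hvb : v ≠ b) (hab : a ≠ b)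
    (h1 : c a b ≠ c v a) (h2 : c a b ≠ c v b) :
    IsNiceShovel n c 1 (fun _ => v) a b := by
  refine ⟨le_refl 1, hab, fun j _ => ⟨hva, hvb⟩, ⟨?_, ?_⟩, h1, h2, fun h => by omega⟩
  · intro j1 hj1 j2 hj2 _
    simp only [Set.mem_Iio] at hj1 hj2; omega
  · intro j hj; omega

lemma shovel_symm (hsym : ∀ u v, c u v = c v u) {t : ℕ} {p : ℕ → Fin n} {u2 u3 : Fin n}
    (hs : IsNiceShovel n c t p u2 u3) : IsNiceShovel n c t p u3 u2 := by
  obtain ⟨ht, hne, hav, hpc, h2, h3, hf⟩ := hs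
  refine ⟨ht, hne.symm, fun j hj => ⟨(hav j hj).2, (hav j hj).1⟩, hpc, ?_, ?_,
    fun h => ⟨(hf h).2, (hf h).1⟩⟩
  · rw [hsym u3 u2]; exact h3
  · rw [hsym u3 u2]; exact h2

lemma prepend_shovel {t : ℕ} (ht : 1 ≤ t) {p : ℕ → Fin n} (hpc : IsPCPath n c p t)
    {v a b : Fin n}
    (hav : ∀ j < t, p j ≠ v ∧ p j ≠ a ∧ p j ≠ b) (hva : v ≠ a) (hvb : v ≠ b) (hab : a ≠ b)
    (hc1 : c a b ≠ c v a) (hc2 : c a b ≠ c v b)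
    (hf1 : c v (p 0) ≠ c v a) (hf2 : c v (p 0) ≠ c v b)
    (hf3 : 2 ≤ t → c v (p 0) ≠ c (p 0) (p 1)) :
    IsNiceShovel n c (t + 1) (fun j => if j = 0 then v else p (j - 1)) a b := by
  obtain ⟨hinj, hedge⟩ := hpc
  refine ⟨by omega, hab, ?_, ⟨?_, ?_⟩, ?_, ?_, ?_⟩
  · intro j hj
    by_cases h : j = 0
    · simp [h, hva, hvb]
    · simp only [if_neg h]
      exact ⟨(hav (j - 1) (by omega)).2.1, (hav (j - 1) (by omega)).2.2⟩
  · intro j1 hj1 j2 hj2 heq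
    simp only [Set.mem_Iio] at hj1 hj2
    by_cases e1 : j1 = 0 <;> by_cases e2 : j2 = 0
    · omega
    · simp only [if_pos e1, if_neg e2] at heq
      exact absurd heq.symm (hav (j2 - 1) (by omega)).1
    · simp only [if_neg e1, if_pos e2] at heq
      exact absurd heq (hav (j1 - 1) (by omega)).1
    · simp only [if_neg e1, if_neg e2] at heq
      have := hinj (Set.mem_Iio.mpr (show j1 - 1 < t by omega))
        (Set.mem_Iio.mpr (show j2 - 1 < t by omega)) heq
      omega
  · intro j hj
    by_cases h : j = 0
    · subst h
      simp only [if_pos rfl, if_neg (by omega : (1:ℕ) ≠ 0), if_neg (by omega : (2:ℕ) ≠ 0)]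
      exact hf3 (by omega)
    · simp only [if_neg h, if_neg (by omega : j + 1 ≠ 0), if_neg (by omega : j + 2 ≠ 0)]
      have e1 : j + 1 - 1 = (j - 1) + 1 := by omega
      have e2 : j + 2 - 1 = (j - 1) + 2 := by omega
      rw [e1, e2]
      exact hedge (j - 1) (by omega)
  · simpa using hc1
  · simpa using hc2
  · intro _
    simp only [if_pos rfl, if_neg (by omega : (1:ℕ) ≠ 0)]
    exact ⟨hf1, hf2⟩


lemma insert_success (hsym : ∀ u v, c u v = c v u) (hmono : MonoC3Free n c)
    {t : ℕ} {p : ℕ → Fin n} {u2 u3 : Fin n}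
    (hs : IsNiceShovel n c t p u2 u3) {x : Fin n}
    (hx2 : x ≠ u2) (hx3 : x ≠ u3) (hxp : ∀ j < t, p j ≠ x)
    {i : ℕ} (hi : i < t)
    (hinv : i + 1 < t → c (p (i + 1)) x = c (p i) (p (i + 1)))
    (h0 : i = 0 → c (p 0) x ≠ c (p 0) u2 ∧ c (p 0) x ≠ c (p 0) u3)
    (h1 : 1 ≤ i → c (p (i - 1)) (p i) ≠ c (p i) x) :
    IsNiceShovel n c (t + 1)
      (fun j => if j ≤ i then p j else if j = i + 1 then x else p (j - 1)) u2 u3 := by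
  obtain ⟨ht, hne, hav, ⟨hinj, hedge⟩, hc2, hc3, hfirst⟩ := hs
  set q : ℕ → Fin n := fun j => if j ≤ i then p j else if j = i + 1 then x else p (j - 1)
    with hq
  have hq1 : ∀ j, j ≤ i → q j = p j := fun j h => if_pos h
  have hq2 : q (i + 1) = x := by
    simp only [hq]
    simp
  have hq3 : ∀ j, i + 2 ≤ j → q j = p (j - 1) := fun j h => by
    simp only [hq, if_neg (by omega : ¬ j ≤ i), if_neg (by omega : j ≠ i + 1)]
  -- the key mono-free fact at position i (when i+1 < t)
  have hkey : i + 1 < t → c (p i) x ≠ c (p i) (p (i + 1)) := by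
    intro hlt
    have d1 : p i ≠ p (i + 1) := fun h =>
      absurd (hinj (Set.mem_Iio.mpr (by omega)) (Set.mem_Iio.mpr hlt) h) (by omega)
    have d2 : p (i + 1) ≠ x := hxp _ hlt
    have d3 : p i ≠ x := hxp _ (by omega)
    exact mono_ne hmono d1 d2 d3 (hinv hlt).symm
  refine ⟨by omega, hne, ?_, ⟨?_, ?_⟩, ?_, ?_, ?_⟩
  · -- avoid u2 u3
    intro j hj
    by_cases h : j ≤ i
    · rw [hq1 j h]; exact hav j (by omega)
    · by_cases h' : j = i + 1
      · rw [h', hq2]; exact ⟨hx2, hx3⟩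
      · rw [hq3 j (by omega)]; exact hav (j - 1) (by omega)
  · -- InjOn
    intro j1 hj1 j2 hj2 heq
    simp only [Set.mem_Iio] at hj1 hj2
    have qval : ∀ j, j < t + 1 → j ≠ i + 1 →
        ∃ j', j' < t ∧ q j = p j' ∧ ((j ≤ i ∧ j' = j) ∨ (i + 2 ≤ j ∧ j' = j - 1)) := by
      intro j hj hjne
      by_cases h : j ≤ i
      · exact ⟨j, by omega, hq1 j h, Or.inl ⟨h, rfl⟩⟩
      · exact ⟨j - 1, by omega, hq3 j (by omega), Or.inr ⟨by omega, rfl⟩⟩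
    by_cases e1 : j1 = i + 1 <;> by_cases e2 : j2 = i + 1
    · omega
    · obtain ⟨j', hj', hqv, _⟩ := qval j2 hj2 e2
      rw [e1, hq2, hqv] at heq
      exact absurd heq.symm (hxp j' hj')
    · obtain ⟨j', hj', hqv, _⟩ := qval j1 hj1 e1
      rw [e2, hq2, hqv] at heq
      exact absurd heq (hxp j' hj')
    · obtain ⟨j1', hj1', hqv1, hd1⟩ := qval j1 hj1 e1
      obtain ⟨j2', hj2', hqv2, hd2⟩ := qval j2 hj2 e2
      rw [hqv1, hqv2] at heq
      have := hinj (Set.mem_Iio.mpr hj1') (Set.mem_Iio.mpr hj2') heq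
      omega
  · -- PC edges
    intro j hj
    by_cases hA : j + 2 ≤ i
    · rw [hq1 j (by omega), hq1 (j + 1) (by omega), hq1 (j + 2) (by omega)]
      exact hedge j (by omega)
    · by_cases hB : j + 2 = i + 1
      · -- j + 1 = i, i ≥ 1
        rw [hq1 j (by omega), hq1 (j + 1) (by omega), show j + 2 = i + 1 from hB, hq2]
        have h1' := h1 (by omega)
        rw [show i = j + 1 from by omega] at h1'
        simpa using h1'
      · by_cases hC : j = i
        · -- edge i vs edge i+1 : c (p i) x ≠ c x (p (i+1))
          rw [hC, hq1 i (le_refl i), hq2, hq3 (i + 2) (by omega)]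
          have hlt : i + 1 < t := by omega
          rw [show i + 2 - 1 = i + 1 from by omega, hsym x (p (i + 1)), hinv hlt]
          exact hkey hlt
        · by_cases hD : j = i + 1
          · -- edge i+1 vs edge i+2
            rw [hD, hq2, hq3 (i + 1 + 1) (by omega), hq3 (i + 1 + 2) (by omega)]
            rw [show i + 1 + 1 - 1 = i + 1 from by omega,
              show i + 1 + 2 - 1 = i + 2 from by omega]
            have hlt : i + 1 < t := by omega
            rw [hsym x (p (i + 1)), hinv hlt]
            exact hedge i (by omega)
          · -- j ≥ i + 2
            have hE : i + 2 ≤ j := by omega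
            rw [hq3 j hE, hq3 (j + 1) (by omega), hq3 (j + 2) (by omega)]
            rw [show j + 1 - 1 = (j - 1) + 1 from by omega,
              show j + 2 - 1 = (j - 1) + 2 from by omega]
            exact hedge (j - 1) (by omega)
  · rw [hq1 0 (by omega)]; exact hc2
  · rw [hq1 0 (by omega)]; exact hc3
  · -- first edge
    intro _
    rw [hq1 0 (by omega)]
    by_cases h : i = 0
    · have : q 1 = x := by rw [show (1 : ℕ) = i + 1 from by omega]; exact hq2
      rw [this]; exact h0 h
    · rw [hq1 1 (by omega)]
      exact hfirst (by omega)

lemma insert_lemma (hsym : ∀ u v, c u v = c v u) (hmono : MonoC3Free n c)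
    {t : ℕ} {p : ℕ → Fin n} {u2 u3 : Fin n}
    (hs : IsNiceShovel n c t p u2 u3) {x : Fin n}
    (hx2 : x ≠ u2) (hx3 : x ≠ u3) (hxp : ∀ j < t, p j ≠ x) :
    (∃ p', IsNiceShovel n c (t + 1) p' u2 u3) ∨
      c (p 0) x = c (p 0) u2 ∨ c (p 0) x = c (p 0) u3 := by
  have ht : 1 ≤ t := hs.1
  have main : ∀ i, i < t → (i + 1 < t → c (p (i + 1)) x = c (p i) (p (i + 1))) →
      (∃ p', IsNiceShovel n c (t + 1) p' u2 u3) ∨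
        c (p 0) x = c (p 0) u2 ∨ c (p 0) x = c (p 0) u3 := by
    intro i
    induction i with
    | zero =>
      intro hlt hinv
      by_cases hfront : c (p 0) x = c (p 0) u2 ∨ c (p 0) x = c (p 0) u3
      · exact Or.inr hfront
      · push_neg at hfront
        exact Or.inl ⟨_, insert_success hsym hmono hs hx2 hx3 hxp hlt hinv
          (fun _ => hfront) (fun h => absurd h (by omega))⟩
    | succ k ih =>
      intro hlt hinv
      by_cases hsucc : c (p k) (p (k + 1)) = c (p (k + 1)) x
      · exact ih (by omega) (fun _ => hsucc.symm)
      · refine Or.inl ⟨_, insert_success hsym hmono hs hx2 hx3 hxp hlt hinv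
          (fun h => absurd h (by omega)) (fun _ => ?_)⟩
        simpa using hsucc
  exact main (t - 1) (by omega) (fun h => absurd h (by omega))

lemma hard_case (hsym : ∀ u v, c u v = c v u) (hmono : MonoC3Free n c)
    {t : ℕ} {p : ℕ → Fin n} {u2 u3 : Fin n}
    (hs : IsNiceShovel n c t p u2 u3) {x : Fin n}
    (hx2 : x ≠ u2) (hx3 : x ≠ u3) (hxp : ∀ j < t, p j ≠ x)
    (heq : c (p 0) x = c (p 0) u2) :
    ∃ p' u2' u3', IsNiceShovel n c (t + 1) p' u2' u3' := by
  obtain ⟨ht, hne, hav, hpc, hc2, hc3, hfirst⟩ := hs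
  have hp02 : p 0 ≠ u2 := (hav 0 (by omega)).1
  have hp03 : p 0 ≠ u3 := (hav 0 (by omega)).2
  have hp0x : p 0 ≠ x := hxp 0 (by omega)
  -- c u2 x ≠ c (p 0) u2
  have hu2x : c u2 x ≠ c (p 0) u2 :=
    mono_ne2 hmono hp02 (fun h => hx2 h.symm) hp0x heq.symm
  -- new shovel with triangle (p 0, u2, x)
  have hs1 : IsNiceShovel n c t p u2 x := by
    refine ⟨ht, fun h => hx2 h.symm, fun j hj => ⟨(hav j hj).1, hxp j hj⟩, hpc, hu2x, ?_, ?_⟩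
    · rw [heq]; exact hu2x
    · intro h2
      refine ⟨(hfirst h2).1, ?_⟩
      rw [heq]; exact (hfirst h2).1
  rcases insert_lemma hsym hmono hs1 hne.symm (fun h => hx3 h.symm)
      (fun j hj => (hav j hj).2) with ⟨p', hp'⟩ | hb
  · exact ⟨p', u2, x, hp'⟩
  · -- c (p 0) u3 = c (p 0) u2
    have hb' : c (p 0) u3 = c (p 0) u2 := by
      rcases hb with h | h
      · exact h
      · exact h.trans heq
    -- all three edges from p 0 have the same color; triangle u2 u3 x has edges ≠ that color
    have hE1 : c u2 u3 ≠ c (p 0) u2 :=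
      mono_ne2 hmono hp02 hne hp03 hb'.symm
    have hE2 : c u2 x  ≠ c (p 0) u2 := hu2x
    have hE3 : c u3 x  ≠ c (p 0) u2 := by
      have := mono_ne2 hmono hp03 (fun h => hx3 h.symm) hp0x (hb'.symm ▸ heq.symm)
      rwa [hb'] at this
    obtain ⟨v, a, b, hperm, hcc1, hcc2⟩ :=
      center_exists hsym hmono hne (fun h => hx3 h.symm) (fun h => hx2 h.symm)
    -- c v (p 0) = c (p 0) u2 for each choice of v, and triangle edges at v avoid that color
    have hvp0 : c v (p 0) = c (p 0) u2 := by
      rcases hperm with ⟨hv, _, _⟩ | ⟨hv, _, _⟩ | ⟨hv, _, _⟩ <;> rw [hv]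
      · rw [hsym u2 (p 0)]
      · rw [hsym u3 (p 0)]; exact hb'
      · rw [hsym x (p 0)]; exact heq
    have hva' : c v a ≠ c (p 0) u2 := by
      rcases hperm with ⟨hv, ha, _⟩ | ⟨hv, ha, _⟩ | ⟨hv, ha, _⟩ <;> rw [hv, ha]
      · exact hE1
      · rw [hsym u3 u2]; exact hE1
      · rw [hsym x u2]; exact hE2
    have hvb' : c v b ≠ c (p 0) u2 := by
      rcases hperm with ⟨hv, _, hbb⟩ | ⟨hv, _, hbb⟩ | ⟨hv, _, hbb⟩ <;> rw [hv, hbb]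
      · exact hE2
      · exact hE3
      · rw [hsym x u3]; exact hE3
    have hdva : v ≠ a := by
      rcases hperm with ⟨hv, ha, _⟩ | ⟨hv, ha, _⟩ | ⟨hv, ha, _⟩ <;> rw [hv, ha]
      · exact hne
      · exact hne.symm
      · exact hx2
    have hdvb : v ≠ b := by
      rcases hperm with ⟨hv, _, hbb⟩ | ⟨hv, _, hbb⟩ | ⟨hv, _, hbb⟩ <;> rw [hv, hbb]
      · exact fun h => hx2 h.symm
      · exact fun h => hx3 h.symm
      · exact hx3
    have hdab : a ≠ b := by
      rcases hperm with ⟨_, ha, hbb⟩ | ⟨_, ha, hbb⟩ | ⟨_, ha, hbb⟩ <;> rw [ha, hbb]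
      · exact fun h => hx3 h.symm
      · exact fun h => hx2 h.symm
      · exact hne
    have hav' : ∀ j < t, p j ≠ v ∧ p j ≠ a ∧ p j ≠ b := by
      intro j hj
      have h2 := (hav j hj).1
      have h3 := (hav j hj).2
      have h4 := hxp j hj
      rcases hperm with ⟨hv, ha, hbb⟩ | ⟨hv, ha, hbb⟩ | ⟨hv, ha, hbb⟩ <;> rw [hv, ha, hbb]
      · exact ⟨h2, h3, h4⟩
      · exact ⟨h3, h2, h4⟩
      · exact ⟨h4, h2, h3⟩
    refine ⟨_, a, b, prepend_shovel ht hpc hav' hdva hdvb hdab hcc1 hcc2 ?_ ?_ ?_⟩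
    · rw [hvp0]; exact fun h => hva' h.symm
    · rw [hvp0]; exact fun h => hvb' h.symm
    · intro h2
      rw [hvp0]
      exact fun h => (hfirst h2).1 h.symm

lemma step_shovel (hsym : ∀ u v, c u v = c v u) (hmono : MonoC3Free n c)
    {t : ℕ} {p : ℕ → Fin n} {u2 u3 : Fin n}
    (hs : IsNiceShovel n c t p u2 u3) {x : Fin n}
    (hx2 : x ≠ u2) (hx3 : x ≠ u3) (hxp : ∀ j < t, p j ≠ x) :
    ∃ p' u2' u3', IsNiceShovel n c (t + 1) p' u2' u3' := by
  rcases insert_lemma hsym hmono hs hx2 hx3 hxp with ⟨p', hp'⟩ | hb | hb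
  · exact ⟨p', u2, u3, hp'⟩
  · exact hard_case hsym hmono hs hx2 hx3 hxp hb
  · exact hard_case hsym hmono (shovel_symm hsym hs) hx3 hx2 hxp hb

end Aux

/-- Let `G` be a mono-`C3`-free edge-colored `K_n` with `n ≥ 3`.  Then
`G` contains a spanning subgraph which is a nice `(n-2)`-shovel. -/
theorem spanning_nice_shovel (n : ℕ) (c : Fin n → Fin n → ℕ)
    (hsym : ∀ u v, c u v = c v u) (hmono : MonoC3Free n c) (hn : 3 ≤ n) :
    ∃ (p : ℕ → Fin n) (u₂ u₃ : Fin n), IsNiceShovel n c (n - 2) p u₂ u₃ ∧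
      ∀ x : Fin n, x = u₂ ∨ x = u₃ ∨ ∃ j < n - 2, p j = x := by
  have main : ∀ t, 1 ≤ t → t + 2 ≤ n → ∃ p u2 u3, IsNiceShovel n c t p u2 u3 := by
    intro t
    induction t with
    | zero => intro h; omega
    | succ k ih =>
      intro _ hle
      rcases Nat.eq_zero_or_pos k with hk | hk
      · subst hk
        set x : Fin n := ⟨0, by omega⟩ with hxdef
        set y : Fin n := ⟨1, by omega⟩ with hydef
        set z : Fin n := ⟨2, by omega⟩ with hzdef
        have hxy : x ≠ y := by simp [hxdef, hydef, Fin.ext_iff]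
        have hyz : y ≠ z := by simp [hydef, hzdef, Fin.ext_iff]
        have hxz : x ≠ z := by simp [hxdef, hzdef, Fin.ext_iff]
        obtain ⟨v, a, b, hperm, hc1, hc2⟩ := center_exists hsym hmono hxy hyz hxz
        have hdist : v ≠ a ∧ v ≠ b ∧ a ≠ b := by
          rcases hperm with ⟨hv, ha, hb⟩ | ⟨hv, ha, hb⟩ | ⟨hv, ha, hb⟩ <;>
            rw [hv, ha, hb]
          · exact ⟨hxy, hxz, hyz⟩
          · exact ⟨hxy.symm, hyz, hxz⟩
          · exact ⟨hxz.symm, hyz.symm, hxy⟩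
        exact ⟨fun _ => v, a, b, base_shovel hdist.1 hdist.2.1 hdist.2.2 hc1 hc2⟩
      · obtain ⟨p, u2, u3, hs⟩ := ih (by omega) (by omega)
        obtain ⟨x, hx⟩ : ∃ x : Fin n,
            x ∉ insert u2 (insert u3 ((Finset.range k).image p)) := by
          by_contra hno
          push_neg at hno
          have hsub : (Finset.univ : Finset (Fin n)) ⊆
              insert u2 (insert u3 ((Finset.range k).image p)) := fun y _ => hno y
          have hcard := Finset.card_le_card hsub
          have hc1 := Finset.card_insert_le u2 (insert u3 ((Finset.range k).image p))
          have hc2 := Finset.card_insert_le u3 ((Finset.range k).image p)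
          have hc3 := Finset.card_image_le (s := Finset.range k) (f := p)
          simp only [Finset.card_univ, Fintype.card_fin, Finset.card_range] at hcard hc3
          omega
        simp only [Finset.mem_insert, Finset.mem_image, Finset.mem_range, not_or,
          not_exists] at hx
        obtain ⟨hx2, hx3, hxp⟩ := hx
        exact step_shovel hsym hmono hs hx2 hx3
          (fun j hj h => hxp j (by simpa using ⟨hj, h⟩))
  obtain ⟨p, u2, u3, hs⟩ := main (n - 2) (by omega) (by omega)
  refine ⟨p, u2, u3, hs, ?_⟩
  obtain ⟨ht, hne, hav, hpc, -⟩ := hs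
  have hinj := hpc.1
  have himg : ((Finset.range (n - 2)).image p).card = n - 2 := by
    rw [Finset.card_image_of_injOn (by rw [Finset.coe_range]; exact hinj),
      Finset.card_range]
  have h3 : u3 ∉ (Finset.range (n - 2)).image p := by
    simp only [Finset.mem_image, Finset.mem_range, not_exists]
    intro j hj
    exact (hav j hj.1).2 hj.2
  have h2 : u2 ∉ insert u3 ((Finset.range (n - 2)).image p) := by
    simp only [Finset.mem_insert, Finset.mem_image, Finset.mem_range, not_or, not_exists]
    refine ⟨hne, ?_⟩
    intro j hj
    exact (hav j hj.1).1 hj.2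
  have hcard : (insert u2 (insert u3 ((Finset.range (n - 2)).image p))).card = n := by
    rw [Finset.card_insert_of_notMem h2, Finset.card_insert_of_notMem h3, himg]
    omega
  have huniv : insert u2 (insert u3 ((Finset.range (n - 2)).image p)) = Finset.univ :=
    Finset.eq_univ_of_card _ (by rw [hcard]; simp)
  intro x0
  have hx0 : x0 ∈ insert u2 (insert u3 ((Finset.range (n - 2)).image p)) := by
    rw [huniv]; exact Finset.mem_univ x0
  simp only [Finset.mem_insert, Finset.mem_image, Finset.mem_range] at hx0
  rcases hx0 with h | h | ⟨j, hj, hpj⟩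
  · exact Or.inl h
  · exact Or.inr (Or.inl h)
  · exact Or.inr (Or.inr ⟨j, hj, hpj⟩)
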